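/- For even m = 2w, the vertex growth series of the tessellation graph X_{ℓ,m} satisfies F_{ℓ,m}(X) = (1 + 2X + ⋯ + 2X^{w−1} + X^w)/(1 − (ℓ−2)X − ⋯ − (ℓ−2)X^{w−1} + X^w). Equivalently, the sequence a_n = γ(n) of vertices at distance n from the base point satisfies the linear recurrence determined by this rational function: (1 + 2X + ⋯ + 2X^{w−1} + X^w) = (Σ a_n X^n)·(1 − (ℓ−2)X − ⋯ − (ℓ−2)X^{w−1} + X^w) as formal power series. -/

import Mathlib

open Finset PowerSeries

/-- Cone-type counting sequence for `X_{ℓ,m}` with even `m = 2w`: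
`coneCount ℓ w n t` is the number of vertices of cone type `t` at distance `n`
from the base point, where type-`w` vertices are counted twice (once from each
of their two predecessors), and contributions from type-`w` vertices are
accordingly halved. Types: the base point has type `0` and `ℓ` successors of
type `1`; a vertex of type `t` with `0 < t < w` has `ℓ-3` successors of type
`1`, one of type `2`, one of type `t+1`; a vertex of type `w` has `ℓ-4`
successors of type `1` and two of type `2`. -/
def coneCount (ℓ w : ℕ) : ℕ → ℕ → ℚ
  | 0, t => if t = 0 then 1 else 0
  | n + 1, t =>
    if t = 1 then
      (ℓ : ℚ) * coneCount ℓ w n 0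
        + ((ℓ : ℚ) - 3) * ∑ s ∈ Finset.Ico 1 w, coneCount ℓ w n s
        + ((ℓ : ℚ) - 4) * (coneCount ℓ w n w / 2)
    else if t = 2 then
      coneCount ℓ w n 1 + (∑ s ∈ Finset.Ico 1 w, coneCount ℓ w n s)
        + coneCount ℓ w n w
    else if 3 ≤ t ∧ t ≤ w then coneCount ℓ w n (t - 1)
    else 0

/-- Total number of vertices at distance `n` (type-`w` vertices, being
double-counted by `coneCount`, contribute with weight `1/2`). -/
def vertexCount (ℓ w n : ℕ) : ℚ :=
  (∑ t ∈ Finset.range w, coneCount ℓ w n t) + coneCount ℓ w n w / 2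

/-- For even `m = 2w`, the vertex growth series of `X_{ℓ,m}` satisfies
`F_{ℓ,m}(X) · (1 - (ℓ-2)X - ⋯ - (ℓ-2)X^{w-1} + X^w) = 1 + 2X + ⋯ + 2X^{w-1} + X^w`
as formal power series. -/

noncomputable def Bser (ℓ w t : ℕ) : PowerSeries ℚ :=
  PowerSeries.mk fun n => coneCount ℓ w n t

lemma B0 (ℓ w : ℕ) : Bser ℓ w 0 = 1 := by
  ext n
  cases n with
  | zero => simp [Bser, coneCount]
  | succ n => simp [Bser, coneCount]

lemma B1eq (ℓ w : ℕ) :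
    Bser ℓ w 1 = X * (C (ℓ:ℚ) * Bser ℓ w 0
      + C ((ℓ:ℚ) - 3) * (∑ s ∈ Finset.Ico 1 w, Bser ℓ w s)
      + C (((ℓ:ℚ) - 4)/2) * Bser ℓ w w) := by
  ext n
  cases n with
  | zero =>
      simp [Bser, coneCount]
  | succ n =>
      rw [coeff_succ_X_mul]
      simp only [Bser, coneCount, coeff_mk, map_add, coeff_C_mul, map_sum, if_pos rfl]
      norm_num
      ring

lemma B2eq (ℓ w : ℕ) :
    Bser ℓ w 2 = X * (Bser ℓ w 1 + (∑ s ∈ Finset.Ico 1 w, Bser ℓ w s) + Bser ℓ w w) := by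
  ext n
  cases n with
  | zero =>
      simp [Bser, coneCount]
  | succ n =>
      rw [coeff_succ_X_mul]
      simp only [Bser, coneCount, coeff_mk, map_add, map_sum]
      norm_num

lemma Bsucc (ℓ w t : ℕ) (h3 : 3 ≤ t) (htw : t ≤ w) :
    Bser ℓ w t = X * Bser ℓ w (t - 1) := by
  have ht0 : t ≠ 0 := by omega
  have ht1 : t ≠ 1 := by omega
  have ht2 : t ≠ 2 := by omega
  ext n
  cases n with
  | zero =>
      simp [Bser, coneCount, ht0]
  | succ n =>
      rw [coeff_succ_X_mul]
      simp only [Bser, coneCount, coeff_mk, if_neg ht1, if_neg ht2, if_pos (And.intro h3 htw)]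

lemma Bpow (ℓ w : ℕ) : ∀ t, 2 ≤ t → t ≤ w → Bser ℓ w t = X ^ (t - 2) * Bser ℓ w 2 := by
  intro t h2t
  induction t, h2t using Nat.le_induction with
  | base => intro _; simp
  | succ t ht ih =>
      intro htw
      rw [Bsucc ℓ w (t+1) (by omega) htw]
      rw [Nat.add_sub_cancel, ih (by omega)]
      rw [← mul_assoc, ← pow_succ']
      congr 2
      omega

lemma Sdecomp (ℓ w : ℕ) (hw : 3 ≤ w) :
    (∑ s ∈ Finset.Ico 1 w, Bser ℓ w s)
      = Bser ℓ w 1 + (∑ j ∈ Finset.range (w-2), (X:PowerSeries ℚ)^j) * Bser ℓ w 2 := by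
  rw [Finset.sum_eq_sum_Ico_succ_bot (by omega : 1 < w)]
  congr 1
  calc ∑ s ∈ Finset.Ico 2 w, Bser ℓ w s
      = ∑ s ∈ Finset.Ico 2 w, (X:PowerSeries ℚ)^(s-2) * Bser ℓ w 2 := by
        refine Finset.sum_congr rfl fun s hs => ?_
        obtain ⟨h2s, hsw⟩ := Finset.mem_Ico.mp hs
        exact Bpow ℓ w s h2s (le_of_lt hsw)
    _ = ∑ j ∈ Finset.range (w-2), (X:PowerSeries ℚ)^(2+j-2) * Bser ℓ w 2 :=
        Finset.sum_Ico_eq_sum_range _ 2 w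
    _ = (∑ j ∈ Finset.range (w-2), (X:PowerSeries ℚ)^j) * Bser ℓ w 2 := by
        rw [Finset.sum_mul]
        exact Finset.sum_congr rfl fun j _ => by norm_num

lemma Fdecomp (ℓ w : ℕ) (hw : 0 < w) :
    (PowerSeries.mk fun n => vertexCount ℓ w n)
      = Bser ℓ w 0 + (∑ s ∈ Finset.Ico 1 w, Bser ℓ w s) + C ((1:ℚ)/2) * Bser ℓ w w := by
  ext n
  simp only [coeff_mk, vertexCount, map_add, coeff_C_mul, map_sum, Bser]
  rw [Finset.range_eq_Ico, Finset.sum_eq_sum_Ico_succ_bot hw]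
  ring

theorem growth_series_vertices (ℓ w : ℕ) (hℓ : 3 ≤ ℓ) (hw : 3 ≤ w) :
    (PowerSeries.mk fun n => vertexCount ℓ w n) *
        (1 - ((ℓ : ℚ) - 2) • (∑ k ∈ Finset.Ico 1 w, (PowerSeries.X : PowerSeries ℚ) ^ k)
          + (PowerSeries.X : PowerSeries ℚ) ^ w)
      = 1 + (∑ k ∈ Finset.Ico 1 w, 2 * (PowerSeries.X : PowerSeries ℚ) ^ k)
          + (PowerSeries.X : PowerSeries ℚ) ^ w := by
  have hc2 : C ((ℓ:ℚ) - 2) = C (ℓ:ℚ) - 2 := by rw [map_sub, map_ofNat]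
  have hc3 : C ((ℓ:ℚ) - 3) = C (ℓ:ℚ) - 3 := by rw [map_sub, map_ofNat]
  have hc4 : C (((ℓ:ℚ) - 4)/2) = (C (ℓ:ℚ) - 4) * C ((1:ℚ)/2) := by
    rw [show ((ℓ:ℚ)-4)/2 = ((ℓ:ℚ)-4)*(1/2) by ring, map_mul, map_sub, map_ofNat]
  have hB0 := B0 ℓ w
  have hBw : Bser ℓ w w = X ^ (w-2) * Bser ℓ w 2 := Bpow ℓ w w (by omega) le_rfl
  have hS := Sdecomp ℓ w hw
  have h1 := B1eq ℓ w
  have h2 := B2eq ℓ w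
  rw [hB0, hS, hBw, hc3, hc4] at h1
  rw [hS, hBw] at h2
  have hp := geom_sum_mul (PowerSeries.X : PowerSeries ℚ) (w-2)
  have hq : (∑ k ∈ Finset.Ico 1 w, (X:PowerSeries ℚ)^k) * (X - 1)
      = X^(w-2) * X^2 - X := by
    have hg := geom_sum_mul (PowerSeries.X : PowerSeries ℚ) w
    have hsplit : (∑ k ∈ Finset.range w, (X:PowerSeries ℚ)^k)
        = 1 + ∑ k ∈ Finset.Ico 1 w, (X:PowerSeries ℚ)^k := by
      rw [Finset.range_eq_Ico, Finset.sum_eq_sum_Ico_succ_bot (by omega : 0 < w)]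
      norm_num
    have hxw : (X:PowerSeries ℚ)^w = X^(w-2) * X^2 := by
      rw [← pow_add]; congr 1; omega
    rw [hsplit, hxw] at hg
    linear_combination hg
  have hh : (2 : PowerSeries ℚ) * C ((1:ℚ)/2) = 1 := by
    rw [show (2 : PowerSeries ℚ) = C 2 from (map_ofNat _ 2).symm, ← map_mul]
    norm_num
  have hxw : (X:PowerSeries ℚ)^w = X^(w-2) * X^2 := by
    rw [← pow_add]; congr 1; omega
  rw [Fdecomp ℓ w (by omega), hB0, hS, hBw, hxw, smul_eq_C_mul, hc2, ← Finset.mul_sum]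
  set m := w - 2 with hm
  set x := (PowerSeries.X : PowerSeries ℚ) with hxdef
  set cc := C (ℓ:ℚ) with hccdef
  set b1 := Bser ℓ w 1 with hb1def
  set b2 := Bser ℓ w 2 with hb2def
  set hf := C ((1:ℚ)/2) with hfdef
  set pp := ∑ j ∈ Finset.range m, x ^ j with hppdef
  set qq := ∑ k ∈ Finset.Ico 1 w, x ^ k with hqqdef
  have hm0 : m ≠ 0 := by omega
  refine mul_left_cancel₀ (a := (8:PowerSeries ℚ) *
      (1 - x*cc - x^2 - x^2*(x^m) + x^2*cc + x^2*cc*(x^m) - x^3*cc*(x^m) + x^4*(x^m))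
      * (x-1)^4) ?_ ?_
  · intro hzero
    have hcoeff := congrArg (PowerSeries.constantCoeff) hzero
    simp [hxdef, hccdef, map_mul, map_sub, map_add, map_pow, zero_pow hm0, map_ofNat] at hcoeff
  · linear_combination
      ((2:PowerSeries ℚ)*((-4:PowerSeries ℚ) + (4:PowerSeries ℚ)*x*(x^m) + (4:PowerSeries ℚ)*x*cc + (4:PowerSeries ℚ)*x^2 + (4:PowerSeries ℚ)*x^2*(x^m) + (-4:PowerSeries ℚ)*x^2*cc + (-8:PowerSeries ℚ)*x^2*cc*(x^m) + (-4:PowerSeries ℚ)*x^3*(x^m) + (-4:PowerSeries ℚ)*x^3*(x^m)^2 + (8:PowerSeries ℚ)*x^3*cc*(x^m) + (4:PowerSeries ℚ)*x^3*cc*(x^m)^2 + (-4:PowerSeries ℚ)*x^4*(x^m) + (-4:PowerSeries ℚ)*x^4*cc*(x^m)^2 + (4:PowerSeries ℚ)*x^5*(x^m)^2)*(x-1)^3) * h1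
      + (((-8:PowerSeries ℚ) + (4:PowerSeries ℚ)*(x^m) + (8:PowerSeries ℚ)*x*(x^m) + (8:PowerSeries ℚ)*x*cc + (-4:PowerSeries ℚ)*x*cc*(x^m) + (8:PowerSeries ℚ)*x^2 + (-4:PowerSeries ℚ)*x^2*(x^m)^2 + (-8:PowerSeries ℚ)*x^2*cc + (-12:PowerSeries ℚ)*x^2*cc*(x^m) + (4:PowerSeries ℚ)*x^2*cc*(x^m)^2 + (-8:PowerSeries ℚ)*x^3*(x^m) + (-8:PowerSeries ℚ)*x^3*(x^m)^2 + (20:PowerSeries ℚ)*x^3*cc*(x^m) + (4:PowerSeries ℚ)*x^3*cc*(x^m)^2 + (-4:PowerSeries ℚ)*x^4*(x^m) + (8:PowerSeries ℚ)*x^4*(x^m)^2 + (-4:PowerSeries ℚ)*x^4*cc*(x^m) + (-12:PowerSeries ℚ)*x^4*cc*(x^m)^2 + (8:PowerSeries ℚ)*x^5*(x^m)^2 + (4:PowerSeries ℚ)*x^5*cc*(x^m)^2 + (-4:PowerSeries ℚ)*x^6*(x^m)^2)*(x-1)^3) * h2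
      + ((x-1)^2*((4:PowerSeries ℚ)*(x^m)*b2 + (8:PowerSeries ℚ)*(x^m)*qq*b2 + (-4:PowerSeries ℚ)*cc*(x^m)*qq*b2 + (-24:PowerSeries ℚ)*x*(x^m)*b2 + (-16:PowerSeries ℚ)*x*(x^m)*qq*b2 + (4:PowerSeries ℚ)*x*cc^2*(x^m)*qq*b2 + (16:PowerSeries ℚ)*x^2*(x^m)*b2 + (16:PowerSeries ℚ)*x^2*(x^m)^2*b2 + (-8:PowerSeries ℚ)*x^2*(x^m)^2*qq*b2 + (24:PowerSeries ℚ)*x^2*cc*(x^m)*b2 + (24:PowerSeries ℚ)*x^2*cc*(x^m)*qq*b2 + (12:PowerSeries ℚ)*x^2*cc*(x^m)^2*qq*b2 + (-4:PowerSeries ℚ)*x^2*cc^2*(x^m)*b2 + (-12:PowerSeries ℚ)*x^2*cc^2*(x^m)*qq*b2 + (-4:PowerSeries ℚ)*x^2*cc^2*(x^m)^2*qq*b2 + (24:PowerSeries ℚ)*x^3*(x^m)*b2 + (16:PowerSeries ℚ)*x^3*(x^m)*qq*b2 + (16:PowerSeries ℚ)*x^3*(x^m)^2*qq*b2 + (-48:PowerSeries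 ℚ)*x^3*cc*(x^m)*b2 + (-32:PowerSeries ℚ)*x^3*cc*(x^m)*qq*b2 + (-48:PowerSeries ℚ)*x^3*cc*(x^m)^2*b2 + (-32:PowerSeries ℚ)*x^3*cc*(x^m)^2*qq*b2 + (8:PowerSeries ℚ)*x^3*cc^2*(x^m)*b2 + (12:PowerSeries ℚ)*x^3*cc^2*(x^m)*qq*b2 + (8:PowerSeries ℚ)*x^3*cc^2*(x^m)^2*b2 + (12:PowerSeries ℚ)*x^3*cc^2*(x^m)^2*qq*b2 + (-20:PowerSeries ℚ)*x^4*(x^m)*b2 + (-8:PowerSeries ℚ)*x^4*(x^m)*qq*b2 + (-32:PowerSeries ℚ)*x^4*(x^m)^2*b2 + (-20:PowerSeries ℚ)*x^4*(x^m)^3*b2 + (24:PowerSeries ℚ)*x^4*cc*(x^m)*b2 + (12:PowerSeries ℚ)*x^4*cc*(x^m)*qq*b2 + (96:PowerSeries ℚ)*x^4*cc*(x^m)^2*b2 + (24:PowerSeries ℚ)*x^4*cc*(x^m)^2*qq*b2 + (24:PowerSeries ℚ)*x^4*cc*(x^m)^3*b2 + (-4:PowerSeries ℚ)*x^4*cc^2*(x^m)*b2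 + (-4:PowerSeries ℚ)*x^4*cc^2*(x^m)*qq*b2 + (-16:PowerSeries ℚ)*x^4*cc^2*(x^m)^2*b2 + (-12:PowerSeries ℚ)*x^4*cc^2*(x^m)^2*qq*b2 + (-4:PowerSeries ℚ)*x^4*cc^2*(x^m)^3*b2 + (-16:PowerSeries ℚ)*x^5*(x^m)^2*qq*b2 + (24:PowerSeries ℚ)*x^5*(x^m)^3*b2 + (-48:PowerSeries ℚ)*x^5*cc*(x^m)^2*b2 + (-48:PowerSeries ℚ)*x^5*cc*(x^m)^3*b2 + (8:PowerSeries ℚ)*x^5*cc^2*(x^m)^2*b2 + (4:PowerSeries ℚ)*x^5*cc^2*(x^m)^2*qq*b2 + (8:PowerSeries ℚ)*x^5*cc^2*(x^m)^3*b2 + (16:PowerSeries ℚ)*x^6*(x^m)^2*b2 + (8:PowerSeries ℚ)*x^6*(x^m)^2*qq*b2 + (16:PowerSeries ℚ)*x^6*(x^m)^3*b2 + (-4:PowerSeries ℚ)*x^6*cc*(x^m)^2*qq*b2 + (24:PowerSeries ℚ)*x^6*cc*(x^m)^3*b2 + (-4:PowerSeries ℚ)*x^6*cc^2*(x^m)^3*b2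 + (-24:PowerSeries ℚ)*x^7*(x^m)^3*b2 + (4:PowerSeries ℚ)*x^8*(x^m)^3*b2)) * hh
      + ((x-1)*((8:PowerSeries ℚ)*b2 + (16:PowerSeries ℚ)*qq*b2 + (-8:PowerSeries ℚ)*cc*qq*b2 + (-32:PowerSeries ℚ)*x*b2 + (-32:PowerSeries ℚ)*x*qq*b2 + (-4:PowerSeries ℚ)*x*(x^m)*b2 + (8:PowerSeries ℚ)*x*cc^2*qq*b2 + (16:PowerSeries ℚ)*x^2*b2 + (20:PowerSeries ℚ)*x^2*(x^m)*b2 + (-16:PowerSeries ℚ)*x^2*(x^m)*qq*b2 + (32:PowerSeries ℚ)*x^2*cc*b2 + (48:PowerSeries ℚ)*x^2*cc*qq*b2 + (4:PowerSeries ℚ)*x^2*cc*(x^m)*b2 + (24:PowerSeries ℚ)*x^2*cc*(x^m)*qq*b2 + (-8:PowerSeries ℚ)*x^2*cc^2*b2 + (-24:PowerSeries ℚ)*x^2*cc^2*qq*b2 + (-8:PowerSeries ℚ)*x^2*cc^2*(x^m)*qq*b2 + (32:PowerSeries ℚ)*x^3*b2 + (32:PowerSeries ℚ)*x^3*qq*b2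 + (8:PowerSeries ℚ)*x^3*(x^m)*b2 + (32:PowerSeries ℚ)*x^3*(x^m)*qq*b2 + (4:PowerSeries ℚ)*x^3*(x^m)^2*b2 + (-64:PowerSeries ℚ)*x^3*cc*b2 + (-64:PowerSeries ℚ)*x^3*cc*qq*b2 + (-72:PowerSeries ℚ)*x^3*cc*(x^m)*b2 + (-64:PowerSeries ℚ)*x^3*cc*(x^m)*qq*b2 + (-4:PowerSeries ℚ)*x^3*cc*(x^m)^2*b2 + (16:PowerSeries ℚ)*x^3*cc^2*b2 + (24:PowerSeries ℚ)*x^3*cc^2*qq*b2 + (16:PowerSeries ℚ)*x^3*cc^2*(x^m)*b2 + (24:PowerSeries ℚ)*x^3*cc^2*(x^m)*qq*b2 + (-24:PowerSeries ℚ)*x^4*b2 + (-16:PowerSeries ℚ)*x^4*qq*b2 + (-40:PowerSeries ℚ)*x^4*(x^m)*b2 + (-28:PowerSeries ℚ)*x^4*(x^m)^2*b2 + (32:PowerSeries ℚ)*x^4*cc*b2 + (24:PowerSeries ℚ)*x^4*cc*qq*b2 + (128:PowerSeries ℚ)*x^4*cc*(x^m)*b2 + (48:PowerSeries ℚ)*x^4*cc*(x^m)*qq*b2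 + (40:PowerSeries ℚ)*x^4*cc*(x^m)^2*b2 + (-8:PowerSeries ℚ)*x^4*cc^2*b2 + (-8:PowerSeries ℚ)*x^4*cc^2*qq*b2 + (-32:PowerSeries ℚ)*x^4*cc^2*(x^m)*b2 + (-24:PowerSeries ℚ)*x^4*cc^2*(x^m)*qq*b2 + (-8:PowerSeries ℚ)*x^4*cc^2*(x^m)^2*b2 + (-4:PowerSeries ℚ)*x^5*(x^m)*b2 + (-32:PowerSeries ℚ)*x^5*(x^m)*qq*b2 + (24:PowerSeries ℚ)*x^5*(x^m)^2*b2 + (-56:PowerSeries ℚ)*x^5*cc*(x^m)*b2 + (-64:PowerSeries ℚ)*x^5*cc*(x^m)^2*b2 + (16:PowerSeries ℚ)*x^5*cc^2*(x^m)*b2 + (8:PowerSeries ℚ)*x^5*cc^2*(x^m)*qq*b2 + (16:PowerSeries ℚ)*x^5*cc^2*(x^m)^2*b2 + (20:PowerSeries ℚ)*x^6*(x^m)*b2 + (16:PowerSeries ℚ)*x^6*(x^m)*qq*b2 + (24:PowerSeries ℚ)*x^6*(x^m)^2*b2 + (-4:PowerSeries ℚ)*x^6*cc*(x^m)*b2 +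 (-8:PowerSeries ℚ)*x^6*cc*(x^m)*qq*b2 + (24:PowerSeries ℚ)*x^6*cc*(x^m)^2*b2 + (-8:PowerSeries ℚ)*x^6*cc^2*(x^m)^2*b2 + (-28:PowerSeries ℚ)*x^7*(x^m)^2*b2 + (4:PowerSeries ℚ)*x^7*cc*(x^m)^2*b2 + (4:PowerSeries ℚ)*x^8*(x^m)^2*b2)) * hp
      + ((-16:PowerSeries ℚ)*b2 + (-16:PowerSeries ℚ)*b1 + (8:PowerSeries ℚ)*(x^m)*b2 + (8:PowerSeries ℚ)*cc + (8:PowerSeries ℚ)*cc*b2 + (8:PowerSeries ℚ)*cc*b1 + (-4:PowerSeries ℚ)*cc*(x^m)*b2 + (32:PowerSeries ℚ)*x*b2 + (48:PowerSeries ℚ)*x*b1 + (-8:PowerSeries ℚ)*x*(x^m)*b2 + (-24:PowerSeries ℚ)*x*cc + (-8:PowerSeries ℚ)*x*cc*b1 + (-4:PowerSeries ℚ)*x*cc*(x^m)*b2 + (-8:PowerSeries ℚ)*x*cc^2 + (-8:PowerSeries ℚ)*x*cc^2*b2 + (-8:PowerSeries ℚ)*x*cc^2*b1 + (4:PowerSeries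 ℚ)*x*cc^2*(x^m)*b2 + (-32:PowerSeries ℚ)*x^2*b1 + (16:PowerSeries ℚ)*x^2*(x^m)*b1 + (-8:PowerSeries ℚ)*x^2*(x^m)^2*b2 + (16:PowerSeries ℚ)*x^2*cc + (-48:PowerSeries ℚ)*x^2*cc*b2 + (-48:PowerSeries ℚ)*x^2*cc*b1 + (-8:PowerSeries ℚ)*x^2*cc*(x^m) + (-24:PowerSeries ℚ)*x^2*cc*(x^m)*b1 + (12:PowerSeries ℚ)*x^2*cc*(x^m)^2*b2 + (32:PowerSeries ℚ)*x^2*cc^2 + (24:PowerSeries ℚ)*x^2*cc^2*b2 + (32:PowerSeries ℚ)*x^2*cc^2*b1 + (8:PowerSeries ℚ)*x^2*cc^2*(x^m) + (8:PowerSeries ℚ)*x^2*cc^2*(x^m)*b1 + (-4:PowerSeries ℚ)*x^2*cc^2*(x^m)^2*b2 + (-32:PowerSeries ℚ)*x^3*b2 + (-32:PowerSeries ℚ)*x^3*b1 + (-16:PowerSeries ℚ)*x^3*(x^m)*b2 + (-48:PowerSeries ℚ)*x^3*(x^m)*b1 + (8:PowerSeries ℚ)*x^3*(x^m)^2*b2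 + (16:PowerSeries ℚ)*x^3*cc + (64:PowerSeries ℚ)*x^3*cc*b2 + (112:PowerSeries ℚ)*x^3*cc*b1 + (24:PowerSeries ℚ)*x^3*cc*(x^m) + (56:PowerSeries ℚ)*x^3*cc*(x^m)*b2 + (88:PowerSeries ℚ)*x^3*cc*(x^m)*b1 + (-20:PowerSeries ℚ)*x^3*cc*(x^m)^2*b2 + (-48:PowerSeries ℚ)*x^3*cc^2 + (-24:PowerSeries ℚ)*x^3*cc^2*b2 + (-48:PowerSeries ℚ)*x^3*cc^2*b1 + (-32:PowerSeries ℚ)*x^3*cc^2*(x^m) + (-24:PowerSeries ℚ)*x^3*cc^2*(x^m)*b2 + (-32:PowerSeries ℚ)*x^3*cc^2*(x^m)*b1 + (8:PowerSeries ℚ)*x^3*cc^2*(x^m)^2*b2 + (16:PowerSeries ℚ)*x^4*b2 + (48:PowerSeries ℚ)*x^4*b1 + (8:PowerSeries ℚ)*x^4*(x^m)*b2 + (32:PowerSeries ℚ)*x^4*(x^m)*b1 + (16:PowerSeries ℚ)*x^4*(x^m)^2*b2 + (-24:PowerSeries ℚ)*x^4*cc + (-24:PowerSeries ℚ)*x^4*cc*b2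 + (-88:PowerSeries ℚ)*x^4*cc*b1 + (-16:PowerSeries ℚ)*x^4*cc*(x^m) + (-68:PowerSeries ℚ)*x^4*cc*(x^m)*b2 + (-112:PowerSeries ℚ)*x^4*cc*(x^m)*b1 + (-8:PowerSeries ℚ)*x^4*cc*(x^m)^2*b2 + (32:PowerSeries ℚ)*x^4*cc^2 + (8:PowerSeries ℚ)*x^4*cc^2*b2 + (32:PowerSeries ℚ)*x^4*cc^2*b1 + (48:PowerSeries ℚ)*x^4*cc^2*(x^m) + (32:PowerSeries ℚ)*x^4*cc^2*(x^m)*b2 + (48:PowerSeries ℚ)*x^4*cc^2*(x^m)*b1 + (-16:PowerSeries ℚ)*x^5*b1 + (24:PowerSeries ℚ)*x^5*(x^m)*b2 + (32:PowerSeries ℚ)*x^5*(x^m)*b1 + (-16:PowerSeries ℚ)*x^5*(x^m)^2*b2 + (8:PowerSeries ℚ)*x^5*cc + (24:PowerSeries ℚ)*x^5*cc*b1 + (-16:PowerSeries ℚ)*x^5*cc*(x^m) + (12:PowerSeries ℚ)*x^5*cc*(x^m)*b2 + (48:PowerSeries ℚ)*x^5*cc*(x^m)*b1 + (24:PowerSeries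 ℚ)*x^5*cc*(x^m)^2*b2 + (-8:PowerSeries ℚ)*x^5*cc^2 + (-8:PowerSeries ℚ)*x^5*cc^2*b1 + (-32:PowerSeries ℚ)*x^5*cc^2*(x^m) + (-12:PowerSeries ℚ)*x^5*cc^2*(x^m)*b2 + (-32:PowerSeries ℚ)*x^5*cc^2*(x^m)*b1 + (-8:PowerSeries ℚ)*x^5*cc^2*(x^m)^2*b2 + (-16:PowerSeries ℚ)*x^6*(x^m)*b2 + (-48:PowerSeries ℚ)*x^6*(x^m)*b1 + (-8:PowerSeries ℚ)*x^6*(x^m)^2*b2 + (24:PowerSeries ℚ)*x^6*cc*(x^m) + (8:PowerSeries ℚ)*x^6*cc*(x^m)*b2 + (8:PowerSeries ℚ)*x^6*cc*(x^m)*b1 + (-4:PowerSeries ℚ)*x^6*cc*(x^m)^2*b2 + (8:PowerSeries ℚ)*x^6*cc^2*(x^m) + (8:PowerSeries ℚ)*x^6*cc^2*(x^m)*b1 + (4:PowerSeries ℚ)*x^6*cc^2*(x^m)^2*b2 + (16:PowerSeries ℚ)*x^7*(x^m)*b1 + (8:PowerSeries ℚ)*x^7*(x^m)^2*b2 + (-8:PowerSeries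 ℚ)*x^7*cc*(x^m) + (-8:PowerSeries ℚ)*x^7*cc*(x^m)*b1 + (-4:PowerSeries ℚ)*x^7*cc*(x^m)^2*b2) * hq
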